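/- Let l and g be natural numbers with 90g ≤ 24l − 103, and let p₁ < p₂ < ⋯ < p_l be pairwise coprime integers with p₁ ≥ 2. Then, as rational numbers, (3g + 1)/2 < (1/2)·(l − 2 − ∑_{i=1}^{l} 1/p_i). -/
import Mathlib


/-- Let `l` and `g` be natural numbers with `90g ≤ 24l − 103`, and let
`p₁ < p₂ < ⋯ < p_l` be pairwise coprime integers with `p₁ ≥ 2`. Then, as rational
numbers, `(3g + 1)/2 < (1/2)·(l − 2 − ∑_{i=1}^{l} 1/p_i)`. -/
theorem stmt2 (l g : ℕ) (hl : 0 < l) (hlg : 90 * (g : ℤ) ≤ 24 * (l : ℤ) - 103)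
    (p : Fin l → ℤ)
    (hmono : StrictMono p)
    (hcop : ∀ i j : Fin l, i ≠ j → Int.gcd (p i) (p j) = 1)
    (h2 : 2 ≤ p ⟨0, hl⟩) :
    (3 * (g : ℚ) + 1) / 2 < (1/2) * ((l : ℚ) - 2 - ∑ i : Fin l, (1 : ℚ) / (p i : ℚ)) := by
  -- l ≥ 5
  have hl5 : 5 ≤ l := by
    have hg : (0 : ℤ) ≤ (g : ℤ) := Int.natCast_nonneg g
    omega
  -- p i ≥ i + 2
  have hp : ∀ i : Fin l, (i : ℤ) + 2 ≤ p i := by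
    have h0 : ∀ k : ℕ, ∀ hk : k < l, (k : ℤ) + p ⟨0, hl⟩ ≤ p ⟨k, hk⟩ := by
      intro k
      induction k with
      | zero => intro hk; simp
      | succ n ih =>
        intro hk
        have hn : n < l := Nat.lt_of_succ_lt hk
        have h1 := ih hn
        have hlt : p ⟨n, hn⟩ < p ⟨n + 1, hk⟩ := hmono (by simp [Fin.lt_def])
        push_cast
        push_cast at h1
        omega
    intro i
    have := h0 i.1 i.2
    simp only [Fin.eta] at this
    omega
  have hppos : ∀ i : Fin l, (0 : ℚ) < (p i : ℚ) := by
    intro i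
    have := hp i
    have : (0 : ℤ) < p i := by omega
    exact_mod_cast this
  have hbound : ∀ i : Fin l, (1 : ℚ) / (p i : ℚ) ≤ 1 / ((i : ℚ) + 2) := by
    intro i
    apply one_div_le_one_div_of_le
    · positivity
    · have := hp i
      exact_mod_cast this
  -- harmonic bound for l ≥ 6
  have hsum : ∀ m : ℕ, 6 ≤ m →
      ∑ i ∈ Finset.range m, (1 : ℚ) / ((i : ℚ) + 2) < (6 * m + 13) / 30 := by
    intro m hm
    induction m with
    | zero => omega
    | succ n ih =>
      rcases Nat.lt_or_ge n 6 with h6 | h6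
      · have hn5 : n = 5 := by omega
        subst hn5
        norm_num [Finset.sum_range_succ]
      · have h1 := ih h6
        rw [Finset.sum_range_succ]
        have h8 : (1 : ℚ) / ((n : ℚ) + 2) ≤ 1 / 8 := by
          apply one_div_le_one_div_of_le
          · norm_num
          · have : (6 : ℚ) ≤ (n : ℚ) := by exact_mod_cast h6
            linarith
        push_cast
        push_cast at h1
        linarith
  -- main bound on the sum of reciprocals
  have hS : ∑ i : Fin l, (1 : ℚ) / (p i : ℚ) < (6 * (l : ℚ) + 13) / 30 := by
    rcases eq_or_lt_of_le hl5 with h5 | h6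
    · -- l = 5
      subst h5
      have b0 : (2 : ℤ) ≤ p 0 := by have := hp 0; simpa using this
      have b1 : (3 : ℤ) ≤ p 1 := by have := hp 1; simpa using this
      have b2 : (4 : ℤ) ≤ p 2 := by have := hp 2; simpa using this
      have b3 : (5 : ℤ) ≤ p 3 := by have := hp 3; simpa using this
      have b4 : (7 : ℤ) ≤ p 4 := by
        by_contra h
        push_neg at h
        have m01 : p 0 < p 1 := hmono (by decide)
        have m12 : p 1 < p 2 := hmono (by decide)
        have m23 : p 2 < p 3 := hmono (by decide)
        have m34 : p 3 < p 4 := hmono (by decide)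
        have e0 : p 0 = 2 := by omega
        have e2 : p 2 = 4 := by omega
        have hc := hcop 0 2 (by decide)
        rw [e0, e2] at hc
        norm_num [Int.gcd] at hc
      have t0 : (1 : ℚ) / (p 0 : ℚ) ≤ 1 / 2 := by
        apply one_div_le_one_div_of_le; norm_num; exact_mod_cast b0
      have t1 : (1 : ℚ) / (p 1 : ℚ) ≤ 1 / 3 := by
        apply one_div_le_one_div_of_le; norm_num; exact_mod_cast b1
      have t2 : (1 : ℚ) / (p 2 : ℚ) ≤ 1 / 4 := by
        apply one_div_le_one_div_of_le; norm_num; exact_mod_cast b2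
      have t3 : (1 : ℚ) / (p 3 : ℚ) ≤ 1 / 5 := by
        apply one_div_le_one_div_of_le; norm_num; exact_mod_cast b3
      have t4 : (1 : ℚ) / (p 4 : ℚ) ≤ 1 / 7 := by
        apply one_div_le_one_div_of_le; norm_num; exact_mod_cast b4
      rw [Fin.sum_univ_five]
      push_cast
      linarith
    · -- l ≥ 6
      calc ∑ i : Fin l, (1 : ℚ) / (p i : ℚ)
          ≤ ∑ i : Fin l, 1 / ((i : ℚ) + 2) :=
            Finset.sum_le_sum fun i _ => hbound i
        _ = ∑ i ∈ Finset.range l, (1 : ℚ) / ((i : ℚ) + 2) :=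
            Fin.sum_univ_eq_sum_range (fun i => (1 : ℚ) / ((i : ℚ) + 2)) l
        _ < (6 * (l : ℚ) + 13) / 30 := by
            have := hsum l h6
            push_cast at this ⊢
            linarith
  have hlgQ : (90 : ℚ) * (g : ℚ) ≤ 24 * (l : ℚ) - 103 := by exact_mod_cast hlg
  linarith
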